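/- Assume C is semiprime. The following are equivalent: (1) C is PP; (2) C is mp and Min(C) is a compact space in the subspace topology induced from the Zariski topology on Spec(C); (3) C is PF and Min(C) is a compact space in the subspace topology induced from the Zariski topology on Spec(C). -/

import Mathlib

open CompleteLattice

/-- A complete lattice equipped with a commutator operation, axiomatizing the congruence
lattice of an algebra in a semidegenerate congruence-modular variety whose compact
congruences are closed under the commutator. -/
class CommutatorLattice (C : Type*) [CompleteLattice C] where
  comm : C → C → C
  comm_comm : ∀ a b : C, comm a b = comm b a
  comm_sSup : ∀ (s : Set C) (b : C), comm (sSup s) b = ⨆ a ∈ s, comm a b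
  comm_le_inf : ∀ a b : C, comm a b ≤ a ⊓ b
  comm_top : ∀ a : C, comm a ⊤ = a
  compactlyGenerated : ∀ x : C,
    ∃ s : Set C, (∀ a ∈ s, IsCompactElement a) ∧ sSup s = x
  top_isCompact : IsCompactElement (⊤ : C)
  comm_isCompact : ∀ a b : C, IsCompactElement a → IsCompactElement b →
    IsCompactElement (comm a b)

namespace CommutatorLattice

variable {C : Type*} [CompleteLattice C] [CommutatorLattice C]

/-- The residuation `a → b := ⨆ {c | [a,c] ≤ b}`. -/
def resid (a b : C) : C := sSup {c : C | comm a c ≤ b}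

/-- The annihilator `a⊥ := a → ⊥`. -/
def ann (a : C) : C := resid a ⊥

/-- Iterated commutator: `cpow a n = [a,a]^n`, with the convention `[a,a]^0 = a`.
Note that `[a,b]^n` for `n ≥ 1` equals `cpow (comm a b) (n-1)`. -/
def cpow (a : C) : ℕ → C
  | 0 => a
  | n + 1 => comm (cpow a n) (cpow a n)

/-- Prime elements: `p ≠ ⊤` and `[a,b] ≤ p` implies `a ≤ p` or `b ≤ p`. -/
def IsPrime (p : C) : Prop := p ≠ ⊤ ∧ ∀ a b : C, comm a b ≤ p → a ≤ p ∨ b ≤ p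

/-- The radical `ρ(a) := ⨅ {p prime | a ≤ p}`. -/
def radical (a : C) : C := sInf {p : C | IsPrime p ∧ a ≤ p}

variable (C) in
/-- `C` is semiprime if `ρ(⊥) = ⊥`. -/
def Semiprime : Prop := radical (⊥ : C) = ⊥

variable (C) in
/-- Condition (⋆): for all compact `a`, `b` and all `n ≥ 1` there is `m ≥ 0` with
`[[a,a]^m, [b,b]^m] ≤ [a,b]^n`.  Here `cpow (comm a b) n = [a,b]^(n+1)`, so `n : ℕ`
ranges exactly over the exponents `≥ 1` of the paper. -/
def Star : Prop := ∀ a b : C, IsCompactElement a → IsCompactElement b →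
  ∀ n : ℕ, ∃ m : ℕ, comm (cpow a m) (cpow b m) ≤ cpow (comm a b) n

/-- Pure elements: `t ⊔ a⊥ = ⊤` for every compact `a ≤ t`. -/
def IsPure (t : C) : Prop := ∀ a : C, IsCompactElement a → a ≤ t → t ⊔ ann a = ⊤

/-- w-pure elements: `t ⊔ (a → ρ(⊥)) = ⊤` for every compact `a ≤ t`. -/
def IsWPure (t : C) : Prop :=
  ∀ a : C, IsCompactElement a → a ≤ t → t ⊔ resid a (radical ⊥) = ⊤

/-- Complemented elements. -/
def IsComplEl (a : C) : Prop := ∃ b : C, a ⊔ b = ⊤ ∧ a ⊓ b = ⊥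

/-- Regular elements: joins of sets of complemented elements. -/
def IsRegular (t : C) : Prop := ∃ S : Set C, (∀ a ∈ S, IsComplEl a) ∧ t = sSup S

/-- Max-regular elements: maximal among regular elements distinct from `⊤`. -/
def IsMaxRegular (t : C) : Prop :=
  IsRegular t ∧ t ≠ ⊤ ∧ ∀ u : C, IsRegular u → u ≠ ⊤ → t ≤ u → u = t

/-- Maximal elements of `C \ {⊤}`. -/
def IsMaximal (p : C) : Prop := p ≠ ⊤ ∧ ∀ q : C, q ≠ ⊤ → p ≤ q → q = p

/-- Minimal primes. -/
def IsMinPrime (p : C) : Prop := IsPrime p ∧ ∀ q : C, IsPrime q → q ≤ p → q = p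

variable (C) in
/-- `C` is mp if every prime lies above a unique minimal prime. -/
def MP : Prop := ∀ p : C, IsPrime p → ∃! q : C, IsMinPrime q ∧ q ≤ p

variable (C) in
/-- `C` is PF if `a⊥` is pure for every compact `a`. -/
def PF : Prop := ∀ a : C, IsCompactElement a → IsPure (ann a)

variable (C) in
/-- `C` is PP if `a⊥` is complemented for every compact `a`. -/
def PP : Prop := ∀ a : C, IsCompactElement a → IsComplEl (ann a)

/-- `O(p) := ⨆ {a compact | a⊥ ≰ p}`. -/
def O (p : C) : C := sSup {a : C | IsCompactElement a ∧ ¬ ann a ≤ p}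

variable (C) in
/-- `C` is normal. -/
def Normal : Prop := ∀ t u : C, t ⊔ u = ⊤ →
  ∃ a b : C, t ⊔ a = ⊤ ∧ u ⊔ b = ⊤ ∧ comm a b = ⊥

variable (C) in
/-- `C` is B-normal. -/
def BNormal : Prop := ∀ t u : C, t ⊔ u = ⊤ →
  ∃ a b : C, IsComplEl a ∧ IsComplEl b ∧ t ⊔ a = ⊤ ∧ u ⊔ b = ⊤ ∧ comm a b = ⊥

variable (C) in
/-- `C` is purified. -/
def Purified : Prop := ∀ p q : C, IsMinPrime p → IsMinPrime q → p ≠ q →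
  ∃ a : C, IsComplEl a ∧ a ≤ p ∧ ann a ≤ q

variable (C) in
/-- The prime spectrum of `C`. -/
abbrev Spec := {p : C // IsPrime p}

variable (C) in
/-- The Zariski topology on `Spec C`: the closed sets are the `V(t) = {p | t ≤ p}`,
equivalently the topology generated by the sets `D(t) = {p | t ≰ p}`. -/
def zariskiTop : TopologicalSpace (Spec C) :=
  TopologicalSpace.generateFrom {U : Set (Spec C) | ∃ t : C, U = {p : Spec C | ¬ t ≤ p.1}}

variable (C) in
/-- The flat topology on `Spec C`: generated by the open basis `V(a)`, `a` compact. -/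
def flatTop : TopologicalSpace (Spec C) :=
  TopologicalSpace.generateFrom
    {U : Set (Spec C) | ∃ a : C, IsCompactElement a ∧ U = {p : Spec C | a ≤ p.1}}

-- basic lemmas
lemma comm_le_left (a b : C) : comm a b ≤ a := (comm_le_inf a b).trans inf_le_left
lemma comm_le_right (a b : C) : comm a b ≤ b := (comm_le_inf a b).trans inf_le_right

lemma comm_sup_left (a b x : C) : comm (a ⊔ b) x = comm a x ⊔ comm b x := by
  rw [← sSup_pair, comm_sSup, iSup_pair]

lemma comm_mono_left {a a' : C} (b : C) (h : a ≤ a') : comm a b ≤ comm a' b := by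
  have : a ⊔ a' = a' := sup_eq_right.2 h
  calc comm a b ≤ comm a b ⊔ comm a' b := le_sup_left
    _ = comm (a ⊔ a') b := (comm_sup_left a a' b).symm
    _ = comm a' b := by rw [this]

lemma comm_mono_right (a : C) {b b' : C} (h : b ≤ b') : comm a b ≤ comm a b' := by
  rw [comm_comm a b, comm_comm a b']; exact comm_mono_left a h

lemma comm_ann (a : C) : comm a (ann a) = ⊥ := by
  rw [comm_comm]
  show comm (sSup {c : C | comm a c ≤ ⊥}) a = ⊥
  rw [comm_sSup]
  refine le_bot_iff.1 (iSup₂_le fun c hc => ?_)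
  rw [comm_comm]; exact hc

lemma le_ann {a x : C} (h : comm a x ≤ ⊥) : x ≤ ann a := le_sSup h

lemma comm_eq_bot_of_le_ann {a x : C} (h : x ≤ ann a) : comm a x = ⊥ :=
  le_bot_iff.1 ((comm_mono_right a h).trans (comm_ann a).le)

lemma prime_inf_le {p : C} (hp : IsPrime p) {a b : C} (h : a ⊓ b ≤ p) :
    a ≤ p ∨ b ≤ p := hp.2 a b ((comm_le_inf a b).trans h)

lemma radical_bot (C : Type*) [CompleteLattice C] [CommutatorLattice C] :
    radical (⊥ : C) = sInf {p : C | IsPrime p} := by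
  unfold radical; congr 1; ext p; simp

lemma inf_eq_bot_of_comm (h : Semiprime C) {a b : C} (hab : comm a b = ⊥) :
    a ⊓ b = ⊥ := by
  refine le_bot_iff.1 ?_
  calc a ⊓ b ≤ radical ⊥ := le_sInf fun p hp => by
        rcases hp.1.2 a b (hab ▸ bot_le) with h' | h'
        · exact inf_le_left.trans h'
        · exact inf_le_right.trans h'
    _ = ⊥ := h

lemma le_ann_iff (h : Semiprime C) {a x : C} : x ≤ ann a ↔ a ⊓ x = ⊥ := by
  constructor
  · intro hx; exact inf_eq_bot_of_comm h (comm_eq_bot_of_le_ann hx)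
  · intro hx; exact le_ann (((comm_le_inf a x).trans hx.le).trans le_rfl)

lemma inf_ann (h : Semiprime C) (a : C) : a ⊓ ann a = ⊥ := (le_ann_iff h).1 le_rfl

lemma ann_antitone {a b : C} (h : a ≤ b) : ann b ≤ ann a :=
  sSup_le fun c hc => le_ann (le_bot_iff.2 (le_bot_iff.1
    ((comm_mono_left c h).trans (le_bot_iff.1 hc).le)))

lemma sSup_compacts (x : C) : sSup {c : C | IsCompactElement c ∧ c ≤ x} = x := by
  obtain ⟨s, hs, rfl⟩ := compactlyGenerated (C := C) x
  refine le_antisymm (sSup_le fun c hc => hc.2) (sSup_le fun c hc => le_sSup ?_)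
  exact ⟨hs c hc, le_sSup hc⟩

lemma le_of_compacts {x y : C} (h : ∀ c : C, IsCompactElement c → c ≤ x → c ≤ y) :
    x ≤ y := by
  conv_lhs => rw [← sSup_compacts x]
  exact sSup_le fun c hc => h c hc.1 hc.2

lemma exists_compact_not_le {x y : C} (h : ¬ x ≤ y) :
    ∃ c : C, IsCompactElement c ∧ c ≤ x ∧ ¬ c ≤ y := by
  by_contra hc
  push_neg at hc
  exact h (le_of_compacts fun c h1 h2 => hc c h1 h2)


lemma comm_sup_sup_le (m a b : C) : comm (m ⊔ a) (m ⊔ b) ≤ m ⊔ comm a b := by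
  rw [comm_sup_left]
  refine sup_le ((comm_le_left _ _).trans le_sup_left) ?_
  rw [comm_comm a, comm_sup_left]
  refine sup_le ((comm_le_left _ _).trans le_sup_left) ?_
  rw [comm_comm b a]
  exact le_sup_right

-- Zorn: prime avoiding a multiplicative set of compacts
lemma exists_prime_avoiding {M : Set C} (hne : M.Nonempty)
    (hcpt : ∀ w ∈ M, IsCompactElement w)
    (hcl : ∀ w₁ ∈ M, ∀ w₂ ∈ M, comm w₁ w₂ ∈ M)
    {t : C} (ht : ∀ w ∈ M, ¬ w ≤ t) :
    ∃ p : C, IsPrime p ∧ t ≤ p ∧ ∀ w ∈ M, ¬ w ≤ p := by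
  set S : Set C := {x | t ≤ x ∧ ∀ w ∈ M, ¬ w ≤ x} with hS
  have hzorn : ∃ m, t ≤ m ∧ Maximal (· ∈ S) m := by
    refine zorn_le_nonempty₀ S (fun c hcS hchain y hy => ?_) t ⟨le_rfl, ht⟩
    refine ⟨sSup c, ⟨(hcS hy).1.trans (le_sSup hy), fun w hw hwle => ?_⟩,
      fun z hz => le_sSup hz⟩
    obtain ⟨z, hz, hwz⟩ := (isCompactElement_iff_le_of_directed_sSup_le _ w).1
      (hcpt w hw) c ⟨y, hy⟩ hchain.directedOn hwle
    exact (hcS hz).2 w hw hwz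
  obtain ⟨m, htm, hmS, hmax⟩ := hzorn
  obtain ⟨w₀, hw₀⟩ := hne
  have hmtop : m ≠ ⊤ := fun h => hmS.2 w₀ hw₀ (h ▸ le_top)
  refine ⟨m, ⟨hmtop, fun a b hab => ?_⟩, htm, hmS.2⟩
  by_contra hcon
  push_neg at hcon
  obtain ⟨ha, hb⟩ := hcon
  have hx : ∀ x : C, ¬ x ≤ m → ∃ w ∈ M, w ≤ m ⊔ x := by
    intro x hxm
    by_contra hno
    push_neg at hno
    have hmem : m ⊔ x ∈ S := ⟨htm.trans le_sup_left, fun w hw => hno w hw⟩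
    have := hmax hmem le_sup_left
    exact hxm (le_sup_right.trans this)
  obtain ⟨w₁, hw₁, hw₁le⟩ := hx a ha
  obtain ⟨w₂, hw₂, hw₂le⟩ := hx b hb
  refine hmS.2 _ (hcl w₁ hw₁ w₂ hw₂) ?_
  calc comm w₁ w₂ ≤ comm (m ⊔ a) (m ⊔ b) :=
        (comm_mono_left _ hw₁le).trans (comm_mono_right _ hw₂le)
    _ ≤ m ⊔ comm a b := comm_sup_sup_le m a b
    _ ≤ m := sup_le le_rfl hab

lemma exists_prime_ge {t : C} (ht : t ≠ ⊤) : ∃ p : C, IsPrime p ∧ t ≤ p := by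
  have := exists_prime_avoiding (M := {⊤}) ⟨⊤, rfl⟩
    (fun w hw => by rw [Set.mem_singleton_iff] at hw; rw [hw]; exact top_isCompact)
    (fun w₁ h₁ w₂ h₂ => by
      rw [Set.mem_singleton_iff] at h₁ h₂
      rw [h₁, h₂, comm_top]; rfl)
    (t := t) (fun w hw => by
      rw [Set.mem_singleton_iff] at hw
      rw [hw]; exact fun h => ht (top_le_iff.1 h))
  obtain ⟨p, hp, htp, _⟩ := this
  exact ⟨p, hp, htp⟩

lemma isPrime_sInf_chain {s : Set C} (hchain : IsChain (· ≤ ·) s) (hne : s.Nonempty)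
    (hp : ∀ p ∈ s, IsPrime p) : IsPrime (sInf s) := by
  obtain ⟨y, hy⟩ := hne
  constructor
  · intro htop
    exact (hp y hy).1 (top_le_iff.1 (htop ▸ sInf_le hy))
  · intro a b hab
    by_contra hcon
    push_neg at hcon
    obtain ⟨ha, hb⟩ := hcon
    rw [le_sInf_iff] at ha hb
    push_neg at ha hb
    obtain ⟨p₁, hp₁, hap₁⟩ := ha
    obtain ⟨p₂, hp₂, hbp₂⟩ := hb
    rcases eq_or_ne p₁ p₂ with rfl | hne'
    · rcases (hp p₁ hp₁).2 a b (hab.trans (sInf_le hp₁)) with h | h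
      · exact hap₁ h
      · exact hbp₂ h
    rcases hchain hp₁ hp₂ hne' with hle | hle
    · rcases (hp p₁ hp₁).2 a b (hab.trans (sInf_le hp₁)) with h | h
      · exact hap₁ h
      · exact hbp₂ (h.trans hle)
    · rcases (hp p₂ hp₂).2 a b (hab.trans (sInf_le hp₂)) with h | h
      · exact hap₁ (h.trans hle)
      · exact hbp₂ h

lemma exists_minPrime_le {q : C} (hq : IsPrime q) :
    ∃ p : C, IsMinPrime p ∧ p ≤ q := by
  set S : Set Cᵒᵈ := {x | IsPrime (OrderDual.ofDual x) ∧ OrderDual.ofDual x ≤ q} with hS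
  have hzorn : ∃ m, OrderDual.toDual q ≤ m ∧ Maximal (· ∈ S) m := by
    refine zorn_le_nonempty₀ S (fun c hcS hchain y hy => ?_) (OrderDual.toDual q)
      ⟨hq, le_rfl⟩
    have hne : (OrderDual.ofDual '' c).Nonempty := ⟨_, y, hy, rfl⟩
    have hchain' : IsChain (· ≤ ·) (OrderDual.ofDual '' c) := by
      rintro _ ⟨x, hx, rfl⟩ _ ⟨z, hz, rfl⟩ hxz
      have hxz' : x ≠ z := fun h => hxz (congrArg _ h)
      rcases hchain hx hz hxz' with h | h
      · exact Or.inr h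
      · exact Or.inl h
    have hprime : IsPrime (sInf (OrderDual.ofDual '' c)) := by
      refine isPrime_sInf_chain hchain' hne ?_
      rintro p ⟨x, hx, rfl⟩
      exact (hcS hx).1
    refine ⟨OrderDual.toDual (sInf (OrderDual.ofDual '' c)), ⟨hprime, ?_⟩, ?_⟩
    · exact (_root_.sInf_le (Set.mem_image_of_mem _ hy)).trans (hcS hy).2
    · intro z hz
      exact _root_.sInf_le (Set.mem_image_of_mem _ hz)
  obtain ⟨m, hqm, hmS, hmax⟩ := hzorn
  refine ⟨OrderDual.ofDual m, ⟨hmS.1, fun r hr hrm => ?_⟩, hqm⟩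
  have hrS : OrderDual.toDual r ∈ S := ⟨hr, hrm.trans hqm⟩
  have hmr : m ≤ OrderDual.toDual r := hrm
  exact le_antisymm hrm (hmax hrS hmr)


/-- Multiplicative closure of a set of elements. -/
inductive Mcl (G : Set C) : C → Prop
  | base {x : C} : x ∈ G → Mcl G x
  | node {x y : C} : Mcl G x → Mcl G y → Mcl G (comm x y)

lemma mcl_compact {G : Set C} (hG : ∀ g ∈ G, IsCompactElement g) :
    ∀ w : C, Mcl G w → IsCompactElement w := by
  intro w hw
  induction hw with
  | base h => exact hG _ h
  | node hx hy ihx ihy => exact comm_isCompact _ _ ihx ihy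

lemma mcl_witness {q a : C} (hq : IsPrime q) (w : C)
    (hw : Mcl ({a} ∪ {c : C | IsCompactElement c ∧ ¬ c ≤ q}) w) :
    ∃ s : C, IsCompactElement s ∧ ¬ s ≤ q ∧ ∀ r : C, IsPrime r → w ≤ r → a ⊓ s ≤ r := by
  induction hw with
  | @base x h =>
    rcases h with h | h
    · rw [Set.mem_singleton_iff] at h
      subst h
      exact ⟨⊤, top_isCompact, fun htop => hq.1 (top_le_iff.1 htop),
        fun r _ hxr => inf_le_left.trans hxr⟩
    · exact ⟨x, h.1, h.2, fun r _ hxr => inf_le_right.trans hxr⟩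
  | @node x y hx hy ihx ihy =>
    obtain ⟨s₁, hs₁c, hs₁q, hs₁⟩ := ihx
    obtain ⟨s₂, hs₂c, hs₂q, hs₂⟩ := ihy
    refine ⟨comm s₁ s₂, comm_isCompact _ _ hs₁c hs₂c, fun hle => ?_, fun r hr hwr => ?_⟩
    · rcases hq.2 _ _ hle with h | h
      · exact hs₁q h
      · exact hs₂q h
    · rcases hr.2 x y hwr with h | h
      · exact (inf_le_inf_left a (comm_le_left s₁ s₂)).trans (hs₁ r hr h)
      · exact (inf_le_inf_left a (comm_le_right s₁ s₂)).trans (hs₂ r hr h)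

/-- If `ann a ≤ q` for a prime `q` and compact `a`, there is a prime `r ≤ q` with `a ≰ r`. -/
lemma exists_prime_le_of_ann_le (h : Semiprime C) {q a : C} (hq : IsPrime q)
    (ha : IsCompactElement a) (hann : ann a ≤ q) :
    ∃ r : C, IsPrime r ∧ r ≤ q ∧ ¬ a ≤ r := by
  set G : Set C := {a} ∪ {c : C | IsCompactElement c ∧ ¬ c ≤ q} with hG
  set M : Set C := {w | Mcl G w} with hM
  have hMne : M.Nonempty := ⟨a, Mcl.base (Or.inl rfl)⟩
  have hGc : ∀ g ∈ G, IsCompactElement g := by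
    rintro g (hg | hg)
    · rw [Set.mem_singleton_iff] at hg; rw [hg]; exact ha
    · exact hg.1
  have hMbot : ∀ w ∈ M, ¬ w ≤ (⊥ : C) := by
    intro w hw hwbot
    obtain ⟨s, hsc, hsq, hsr⟩ := mcl_witness hq w hw
    have h1 : a ⊓ s ≤ radical ⊥ :=
      le_sInf fun p hp => hsr p hp.1 (hwbot.trans bot_le)
    rw [h] at h1
    have h2 : s ≤ ann a := le_ann ((comm_le_inf a s).trans h1)
    exact hsq (h2.trans hann)
  obtain ⟨m, hm, _, hmM⟩ := exists_prime_avoiding hMne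
    (fun w hw => mcl_compact hGc w hw) (fun w₁ h₁ w₂ h₂ => Mcl.node h₁ h₂) hMbot
  refine ⟨m, hm, ?_, fun hcon => hmM a (Mcl.base (Or.inl rfl)) hcon⟩
  refine le_of_compacts fun c hc hcm => ?_
  by_contra hcq
  exact hmM c (Mcl.base (Or.inr ⟨hc, hcq⟩)) hcm

lemma minPrime_ann_not_le (h : Semiprime C) {p a : C} (hp : IsMinPrime p)
    (ha : IsCompactElement a) (hap : a ≤ p) : ¬ ann a ≤ p := by
  intro hann
  obtain ⟨r, hr, hrp, har⟩ := exists_prime_le_of_ann_le h hp.1 ha hann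
  exact har ((hp.2 r hr hrp) ▸ hap)

lemma le_prime_of_ann_not_le {p a : C} (hp : IsPrime p) (hann : ¬ ann a ≤ p) :
    a ≤ p := by
  rcases hp.2 a (ann a) ((comm_ann a) ▸ bot_le) with h | h
  · exact h
  · exact absurd h hann

lemma ann_le_minPrime (h : Semiprime C) {p a : C} (hp : IsMinPrime p)
    (ha : IsCompactElement a) (hap : ¬ a ≤ p) : ann a ≤ p := by
  by_contra hann
  exact hap (le_prime_of_ann_not_le hp.1 hann)

/-- In an mp lattice, if `p` is a minimal prime below the prime `q` and `a` is a compact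
element below `p`, then `ann a ≰ q`. -/
lemma mp_ann_not_le (h : Semiprime C) (hmp : MP C) {q p a : C} (hq : IsPrime q)
    (hp : IsMinPrime p) (hpq : p ≤ q) (ha : IsCompactElement a) (hap : a ≤ p) :
    ¬ ann a ≤ q := by
  intro hann
  obtain ⟨r, hr, hrq, har⟩ := exists_prime_le_of_ann_le h hq ha hann
  obtain ⟨p', hp', hp'r⟩ := exists_minPrime_le hr
  obtain ⟨u, _, huniq⟩ := hmp q hq
  have h1 : p' = u := huniq p' ⟨hp', hp'r.trans hrq⟩
  have h2 : p = u := huniq p ⟨hp, hpq⟩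
  have hpp' : p = p' := h2.trans h1.symm
  have hap' : a ≤ p' := hpp' ▸ hap
  exact har (hap'.trans hp'r)

variable (C) in
/-- The key annihilator condition equivalent to compactness of the minimal prime spectrum. -/
def AnnCond : Prop := ∀ t : C, (∀ p : C, IsMinPrime p → ¬ t ≤ p) →
  ∃ c : C, IsCompactElement c ∧ c ≤ t ∧ ann c = ⊥

lemma pp_pf (h : Semiprime C) (hpp : PP C) : PF C := by
  intro a ha b hb hba
  obtain ⟨c, hsup, hinf⟩ := hpp a ha
  have hc : c ≤ ann b := (le_ann_iff h).2 (le_bot_iff.1 (by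
    calc b ⊓ c ≤ ann a ⊓ c := inf_le_inf_right c hba
      _ = ⊥ := hinf))
  exact top_le_iff.1 (hsup ▸ sup_le_sup_left hc (ann a))

lemma pf_mp (h : Semiprime C) (hpf : PF C) : MP C := by
  have key : ∀ q p₁ p₂ : C, IsPrime q → IsMinPrime p₁ → IsMinPrime p₂ →
      p₁ ≤ q → p₂ ≤ q → p₁ ≤ p₂ := by
    intro q p₁ p₂ hq hp₁ hp₂ h₁q h₂q
    by_contra hle
    obtain ⟨a, ha, hap₁, hap₂⟩ := exists_compact_not_le hle
    have hann₂ : ann a ≤ p₂ := ann_le_minPrime h hp₂ ha hap₂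
    have hann₁ : ¬ ann a ≤ p₁ := minPrime_ann_not_le h hp₁ ha hap₁
    obtain ⟨b, hb, hba, hbp₁⟩ := exists_compact_not_le hann₁
    have htop : ann a ⊔ ann b = ⊤ := hpf a ha b hb hba
    have hannb : ann b ≤ p₁ := by
      rcases hp₁.1.2 b (ann b) ((comm_ann b) ▸ bot_le) with h' | h'
      · exact absurd h' hbp₁
      · exact h'
    exact hq.1 (top_le_iff.1 (htop ▸ sup_le (hann₂.trans h₂q) (hannb.trans h₁q)))
  intro q hq
  obtain ⟨p, hp, hpq⟩ := exists_minPrime_le hq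
  refine ⟨p, ⟨hp, hpq⟩, fun p' hmem => ?_⟩
  obtain ⟨hp', hp'q⟩ := hmem
  exact le_antisymm (key q p' p hq hp' hp hp'q hpq) (key q p p' hq hp hp' hpq hp'q)

lemma mp_pf (h : Semiprime C) (hmp : MP C) : PF C := by
  intro a ha b hb hba
  by_contra hne
  obtain ⟨q, hq, hle⟩ := exists_prime_ge hne
  obtain ⟨p, hp, hpq⟩ := exists_minPrime_le hq
  have hab : comm a b = ⊥ := comm_eq_bot_of_le_ann hba
  rcases hp.1.2 a b (hab ▸ bot_le) with h' | h'
  · exact mp_ann_not_le h hmp hq hp hpq ha h' (le_sup_left.trans hle)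
  · exact mp_ann_not_le h hmp hq hp hpq hb h' (le_sup_right.trans hle)

lemma pp_annCond (h : Semiprime C) (hpp : PP C) : AnnCond C := by
  intro t ht
  set T : Set C := (fun c => ann (ann c)) '' {c : C | IsCompactElement c ∧ c ≤ t} with hT
  have hu : sSup T = ⊤ := by
    by_contra hne
    obtain ⟨q, hq, huq⟩ := exists_prime_ge hne
    obtain ⟨p, hp, hpq⟩ := exists_minPrime_le hq
    have htp : t ≤ p := by
      refine le_of_compacts fun c hc hct => ?_
      obtain ⟨d, hsup, hinf⟩ := hpp c hc
      have hd : d ≤ ann (ann c) := (le_ann_iff h).2 hinf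
      have h1 : (⊤ : C) ≤ ann c ⊔ ann (ann c) := hsup ▸ sup_le_sup_left hd (ann c)
      have hmem : c ∈ {c : C | IsCompactElement c ∧ c ≤ t} := ⟨hc, hct⟩
      have h2 : ann (ann c) ≤ q :=
        (_root_.le_sSup (Set.mem_image_of_mem (fun c => ann (ann c)) hmem)).trans huq
      have h3 : ¬ ann c ≤ q := fun hcq =>
        hq.1 (top_le_iff.1 (h1.trans (sup_le hcq h2)))
      exact le_prime_of_ann_not_le hp.1 (fun hcp => h3 (hcp.trans hpq))
    exact ht p hp htp
  obtain ⟨F, hF, hFs⟩ := (isCompactElement_iff_exists_le_sSup_of_le_sSup _ _).1 top_isCompact T (hu ▸ le_rfl)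
  have hchoice : ∀ y ∈ F, ∃ c : C, (IsCompactElement c ∧ c ≤ t) ∧ y = ann (ann c) := by
    intro y hy
    obtain ⟨c, hc, hcy⟩ := hF hy
    exact ⟨c, hc, hcy.symm⟩
  choose g hg1 hg2 using hchoice
  classical
  set c₀ : C := F.attach.sup (fun y => g y.1 y.2) with hc₀
  have hc₀c : IsCompactElement c₀ :=
    isCompactElement_finsetSup _ (fun x _ => (hg1 x.1 x.2).1)
  have hc₀t : c₀ ≤ t := Finset.sup_le fun x _ => (hg1 x.1 x.2).2
  refine ⟨c₀, hc₀c, hc₀t, le_bot_iff.1 ?_⟩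
  have hx : ∀ y ∈ F, comm y (ann c₀) ≤ ⊥ := by
    intro y hy
    have hgy : g y hy ≤ c₀ :=
      Finset.le_sup (f := fun z : {z // z ∈ F} => g z.1 z.2) (F.mem_attach ⟨y, hy⟩)
    have h1 : ann c₀ ≤ ann (g y hy) := ann_antitone hgy
    have h2 : y ⊓ ann c₀ ≤ ann (ann (g y hy)) ⊓ ann (g y hy) :=
      inf_le_inf (hg2 y hy).le h1
    have h3 : ann (ann (g y hy)) ⊓ ann (g y hy) = ⊥ := by
      rw [inf_comm]; exact inf_ann h (ann (g y hy))
    calc comm y (ann c₀) ≤ y ⊓ ann c₀ := comm_le_inf _ _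
      _ ≤ ⊥ := h3 ▸ h2
  calc ann c₀ = comm (ann c₀) ⊤ := (comm_top _).symm
    _ ≤ comm (ann c₀) (F.sup id) := comm_mono_right _ hFs
    _ = comm (F.sup id) (ann c₀) := comm_comm _ _
    _ = comm (sSup ↑F) (ann c₀) := by rw [Finset.sup_id_eq_sSup]
    _ = ⨆ y ∈ (↑F : Set C), comm y (ann c₀) := comm_sSup _ _
    _ ≤ ⊥ := iSup₂_le fun y hy => hx y hy

lemma compact_le_sup {c a x : C} (hc : IsCompactElement c) (hle : c ≤ a ⊔ x) :
    ∃ b : C, IsCompactElement b ∧ b ≤ x ∧ c ≤ a ⊔ b := by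
  classical
  have h2 : c ≤ sSup ({a} ∪ {b : C | IsCompactElement b ∧ b ≤ x}) := by
    rw [_root_.sSup_union, sSup_singleton, sSup_compacts]
    exact hle
  obtain ⟨F, hF, hFs⟩ := (isCompactElement_iff_exists_le_sSup_of_le_sSup _ _).1 hc _ h2
  refine ⟨(F.erase a).sup id, ?_, ?_, ?_⟩
  · refine isCompactElement_finsetSup _ fun y hy => ?_
    rcases hF (Finset.mem_of_mem_erase hy) with h | h
    · exact absurd h (Finset.ne_of_mem_erase hy)
    · exact h.1
  · refine Finset.sup_le fun y hy => ?_
    rcases hF (Finset.mem_of_mem_erase hy) with h | h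
    · exact absurd h (Finset.ne_of_mem_erase hy)
    · exact h.2
  · refine hFs.trans (Finset.sup_le fun y hy => ?_)
    by_cases hya : y = a
    · rw [hya]; exact le_sup_left
    · exact (Finset.le_sup (f := id) (Finset.mem_erase.2 ⟨hya, hy⟩)).trans le_sup_right

lemma pf_annCond_pp (h : Semiprime C) (hpf : PF C) (hac : AnnCond C) : PP C := by
  intro a ha
  have hcov : ∀ p : C, IsMinPrime p → ¬ (a ⊔ ann a ≤ p) := by
    intro p hp hle
    exact minPrime_ann_not_le h hp ha (le_sup_left.trans hle) (le_sup_right.trans hle)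
  obtain ⟨c, hc, hct, hcann⟩ := hac (a ⊔ ann a) hcov
  obtain ⟨b, hb, hbx, hcb⟩ := compact_le_sup hc hct
  have h1 : ann a ⊓ ann b ≤ ann c := by
    refine le_ann ?_
    calc comm c (ann a ⊓ ann b) ≤ comm (a ⊔ b) (ann a ⊓ ann b) := comm_mono_left _ hcb
      _ = comm a (ann a ⊓ ann b) ⊔ comm b (ann a ⊓ ann b) := comm_sup_left _ _ _
      _ ≤ ⊥ := sup_le
          (((comm_mono_right a inf_le_left).trans (comm_ann a).le))
          (((comm_mono_right b inf_le_right).trans (comm_ann b).le))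
  have h2 : ann a ⊓ ann b = ⊥ := le_bot_iff.1 (h1.trans hcann.le)
  exact ⟨ann b, hpf a ha b hb hbx, h2⟩

lemma isOpen_basic (t : C) :
    @IsOpen (Spec C) (zariskiTop C) {p : Spec C | ¬ t ≤ p.1} :=
  TopologicalSpace.isOpen_generateFrom_of_mem ⟨t, rfl⟩

lemma zariski_mem_basis {U : Set (Spec C)} (hU : @IsOpen (Spec C) (zariskiTop C) U)
    {p : Spec C} (hp : p ∈ U) :
    ∃ t : C, ¬ t ≤ p.1 ∧ {q : Spec C | ¬ t ≤ q.1} ⊆ U := by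
  have hU' : TopologicalSpace.GenerateOpen
      {V : Set (Spec C) | ∃ t : C, V = {p : Spec C | ¬ t ≤ p.1}} U := hU
  clear hU
  revert hp
  induction hU' with
  | basic s hs =>
    intro hp
    obtain ⟨t, rfl⟩ := hs
    exact ⟨t, hp, fun q hq => hq⟩
  | univ =>
    intro _
    exact ⟨⊤, fun hle => p.2.1 (top_le_iff.1 hle), fun q _ => trivial⟩
  | inter s₁ s₂ h₁ h₂ ih₁ ih₂ =>
    intro hp
    obtain ⟨t₁, ht₁, hsub₁⟩ := ih₁ hp.1
    obtain ⟨t₂, ht₂, hsub₂⟩ := ih₂ hp.2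
    refine ⟨comm t₁ t₂, fun hle => ?_, fun q hq => ?_⟩
    · rcases p.2.2 _ _ hle with h' | h'
      · exact ht₁ h'
      · exact ht₂ h'
    · exact ⟨hsub₁ (fun h' => hq ((comm_le_left t₁ t₂).trans h')),
        hsub₂ (fun h' => hq ((comm_le_right t₁ t₂).trans h'))⟩
  | sUnion S hS ih =>
    intro hp
    obtain ⟨s, hsS, hps⟩ := hp
    obtain ⟨t, ht, hsub⟩ := ih s hsS hps
    exact ⟨t, ht, hsub.trans (Set.subset_sUnion_of_mem hsS)⟩

lemma annCond_of_isCompact (h : Semiprime C)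
    (hmin : @IsCompact (Spec C) (zariskiTop C) {q : Spec C | IsMinPrime q.1}) :
    AnnCond C := by
  intro t ht
  letI : TopologicalSpace (Spec C) := zariskiTop C
  have hcov : {q : Spec C | IsMinPrime q.1} ⊆
      ⋃ i : {c : C // IsCompactElement c ∧ c ≤ t}, {p : Spec C | ¬ i.1 ≤ p.1} := by
    intro q hq
    obtain ⟨c, hc, hct, hcq⟩ := exists_compact_not_le (ht q.1 hq)
    exact Set.mem_iUnion.2 ⟨⟨c, hc, hct⟩, hcq⟩
  obtain ⟨F, hF⟩ := hmin.elim_finite_subcover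
    (fun i : {c : C // IsCompactElement c ∧ c ≤ t} => {p : Spec C | ¬ i.1 ≤ p.1})
    (fun i => isOpen_basic i.1) hcov
  classical
  set c₀ : C := F.sup (fun i => i.1) with hc₀def
  have hc₀c : IsCompactElement c₀ := isCompactElement_finsetSup _ fun i _ => i.2.1
  have hc₀t : c₀ ≤ t := Finset.sup_le fun i _ => i.2.2
  refine ⟨c₀, hc₀c, hc₀t, ?_⟩
  have hrad : ann c₀ ≤ radical (⊥ : C) := by
    refine le_sInf fun r hr => ?_
    obtain ⟨p, hpmin, hpr⟩ := exists_minPrime_le hr.1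
    have hpMem : (⟨p, hpmin.1⟩ : Spec C) ∈ {q : Spec C | IsMinPrime q.1} := hpmin
    obtain ⟨i, hiF, hip⟩ := Set.mem_iUnion₂.1 (hF hpMem)
    have hnc : ¬ c₀ ≤ p := fun hc =>
      hip ((Finset.le_sup (f := fun i => i.1) hiF).trans hc)
    exact (ann_le_minPrime h hpmin hc₀c hnc).trans hpr
  exact le_bot_iff.1 (h ▸ hrad)

lemma isCompact_of_annCond (h : Semiprime C) (hac : AnnCond C) :
    @IsCompact (Spec C) (zariskiTop C) {q : Spec C | IsMinPrime q.1} := by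
  letI : TopologicalSpace (Spec C) := zariskiTop C
  refine isCompact_of_finite_subcover fun {ι} U hUo hcov => ?_
  classical
  set S : Set C :=
    {c : C | IsCompactElement c ∧ ∃ i : ι, {p : Spec C | ¬ c ≤ p.1} ⊆ U i} with hSdef
  have hS : ∀ p : C, IsMinPrime p → ∃ c ∈ S, ¬ c ≤ p := by
    intro p hp
    have hpmem : (⟨p, hp.1⟩ : Spec C) ∈ ⋃ i, U i :=
      hcov (show IsMinPrime ((⟨p, hp.1⟩ : Spec C)).1 from hp)
    obtain ⟨i, hi⟩ := Set.mem_iUnion.1 hpmem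
    obtain ⟨s, hs, hsub⟩ := zariski_mem_basis (hUo i) hi
    obtain ⟨c, hc, hcs, hcp⟩ := exists_compact_not_le hs
    refine ⟨c, ⟨hc, i, fun q hq => hsub (fun h' => hq (hcs.trans h'))⟩, hcp⟩
  have hts : ∀ p : C, IsMinPrime p → ¬ sSup S ≤ p := by
    intro p hp hle
    obtain ⟨c, hcS, hcp⟩ := hS p hp
    exact hcp ((_root_.le_sSup hcS).trans hle)
  obtain ⟨c₀, hc₀c, hc₀t, hc₀ann⟩ := hac (sSup S) hts
  obtain ⟨F, hFsub, hFle⟩ := (isCompactElement_iff_exists_le_sSup_of_le_sSup _ _).1 hc₀c S hc₀t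
  have hchoice : ∀ y ∈ F, ∃ i : ι, {p : Spec C | ¬ y ≤ p.1} ⊆ U i := fun y hy =>
    (hFsub hy).2
  choose f hf using hchoice
  refine ⟨F.attach.image (fun y => f y.1 y.2), fun q hq => ?_⟩
  have hqc₀ : ¬ c₀ ≤ q.1 := fun hle =>
    minPrime_ann_not_le h hq hc₀c hle (hc₀ann ▸ bot_le)
  have hFq : ¬ F.sup id ≤ q.1 := fun h' => hqc₀ (hFle.trans h')
  have hy : ∃ y ∈ F, ¬ y ≤ q.1 := by
    by_contra hcon
    push_neg at hcon
    exact hFq (Finset.sup_le fun y hyF => hcon y hyF)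
  obtain ⟨y, hyF, hyq⟩ := hy
  exact Set.mem_biUnion
    (Finset.mem_image.2 ⟨⟨y, hyF⟩, F.mem_attach _, rfl⟩) (hf y hyF hyq)

theorem statement18 (h : Semiprime C) :
    (PP C ↔ MP C ∧ @IsCompact (Spec C) (zariskiTop C) {q : Spec C | IsMinPrime q.1}) ∧
    (PP C ↔ PF C ∧ @IsCompact (Spec C) (zariskiTop C) {q : Spec C | IsMinPrime q.1}) := by
  constructor
  · constructor
    · intro hpp
      exact ⟨pf_mp h (pp_pf h hpp), isCompact_of_annCond h (pp_annCond h hpp)⟩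
    · rintro ⟨hmp, hcomp⟩
      exact pf_annCond_pp h (mp_pf h hmp) (annCond_of_isCompact h hcomp)
  · constructor
    · intro hpp
      exact ⟨pp_pf h hpp, isCompact_of_annCond h (pp_annCond h hpp)⟩
    · rintro ⟨hpf, hcomp⟩
      exact pf_annCond_pp h hpf (annCond_of_isCompact h hcomp)

end CommutatorLattice
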